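/- Let $A$ be a finite set and $f, g \in \mathrm{Map}(A)$, with normalized Hamming distance $d_H(f,g) = |\{x : f(x) \neq g(x)\}|/|A|$. For $l \in \mathbb{N}_+$ define $f^{\times l}, g^{\times l} \in \mathrm{Map}(A^l)$ coordinatewise. Then $d_H(f^{\times l}, g^{\times l}) = 1 - (1 - d_H(f,g))^l$. -/

import Mathlib

/-- For self-maps `f, g` of a finite set `A` and the coordinatewise maps
`f^{×l}, g^{×l}` on `A^l`, the normalized Hamming distances satisfy
`d_H(f^{×l}, g^{×l}) = 1 - (1 - d_H(f,g))^l`. -/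
theorem stmt9 {A : Type*} [Fintype A] (f g : A → A) (l : ℕ) (hl : 1 ≤ l) :
    (Nat.card {x : Fin l → A // (fun i => f (x i)) ≠ (fun i => g (x i))} : ℝ)
        / Fintype.card (Fin l → A)
      = 1 - (1 - (Nat.card {a : A // f a ≠ g a} : ℝ) / Fintype.card A) ^ l := by
  classical
  set N := Fintype.card A with hN
  set m := Fintype.card {a : A // f a = g a} with hm
  have hmN : m ≤ N := Fintype.card_subtype_le _
  have hk : Nat.card {a : A // f a ≠ g a} = N - m := by
    rw [Nat.card_eq_fintype_card]
    exact Fintype.card_subtype_compl _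
  have hEq : Fintype.card {x : Fin l → A // (fun i => f (x i)) = (fun i => g (x i))}
      = m ^ l := by
    have e1 : {x : Fin l → A // (fun i => f (x i)) = (fun i => g (x i))}
        ≃ {x : Fin l → A // ∀ i, f (x i) = g (x i)} :=
      Equiv.subtypeEquivRight (fun x => funext_iff)
    have e2 : {x : Fin l → A // ∀ i, f (x i) = g (x i)}
        ≃ (Fin l → {a : A // f a = g a}) :=
      Equiv.subtypePiEquivPi (p := fun _ a => f a = g a)
    rw [Fintype.card_congr (e1.trans e2), Fintype.card_fun, Fintype.card_fin]
  have hKl : Nat.card {x : Fin l → A // (fun i => f (x i)) ≠ (fun i => g (x i))}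
      = N ^ l - m ^ l := by
    rw [Nat.card_eq_fintype_card, Fintype.card_subtype_compl, hEq,
      Fintype.card_fun, Fintype.card_fin]
  have hcard : (Fintype.card (Fin l → A) : ℝ) = (N : ℝ) ^ l := by
    rw [Fintype.card_fun, Fintype.card_fin]; push_cast; ring
  rcases Nat.eq_zero_or_pos N with h0 | hpos
  · have hm0 : m = 0 := le_antisymm (h0 ▸ hmN) (Nat.zero_le _)
    rw [hKl, hcard, hk, h0, hm0]
    norm_num [zero_pow (Nat.one_le_iff_ne_zero.mp hl)]
  · have hN0 : (N : ℝ) ≠ 0 := by positivity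
    have hml : m ^ l ≤ N ^ l := Nat.pow_le_pow_left hmN l
    rw [hKl, hcard, hk]
    have : (1 : ℝ) - (↑(N - m) : ℝ) / N = (m : ℝ) / N := by
      rw [Nat.cast_sub hmN]; field_simp; ring
    rw [this, div_pow, Nat.cast_sub hml]
    push_cast
    field_simp
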